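/- For every integer k ≥ 1 and all nonnegative integers n, m, n₀, m₀ with n₀ < 3 and m₀ < 3, the binomial coefficient C(n·3^k + n₀, m·3^k + m₀) is congruent to C(n·3^⌊(k−1)/2⌋, m·3^⌊(k−1)/2⌋)·C(n₀, m₀) modulo 3^k. -/

import Mathlib

open Finset

lemma myDvdChoose (k N l : ℕ) (hN : 3 ^ k ∣ N) (hl : ¬ 3 ∣ l) : 3 ^ k ∣ N.choose l := by
  have hl0 : 0 < l := Nat.pos_of_ne_zero (by rintro rfl; exact hl ⟨0, rfl⟩)
  have hcop : Nat.Coprime (3 ^ k) l :=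
    Nat.Coprime.pow_left _ ((Nat.Prime.coprime_iff_not_dvd (by norm_num)).mpr hl)
  rcases Nat.eq_zero_or_pos N with rfl | hNpos
  · rw [Nat.choose_eq_zero_of_lt hl0]; exact dvd_zero _
  · obtain ⟨n', rfl⟩ : ∃ n', N = n' + 1 := ⟨N - 1, by omega⟩
    obtain ⟨l', rfl⟩ : ∃ l', l = l' + 1 := ⟨l - 1, by omega⟩
    have key := Nat.add_one_mul_choose_eq n' l'
    have hdvd : 3 ^ k ∣ (n' + 1).choose (l' + 1) * (l' + 1) := by
      rw [← key]; exact Dvd.dvd.mul_right hN _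
    exact hcop.dvd_of_dvd_mul_right hdvd

lemma lucasStep (k N M n0 m0 : ℕ) (hk : 1 ≤ k) (hN : 3 ^ k ∣ N) (hM : 3 ^ k ∣ M)
    (hn0 : n0 < 3) (hm0 : m0 < 3) :
    (N + n0).choose (M + m0) ≡ N.choose M * n0.choose m0 [MOD 3 ^ k] := by
  rw [Nat.add_choose_eq]
  have hmem : ((M, m0) : ℕ × ℕ) ∈ Finset.HasAntidiagonal.antidiagonal (M + m0) := by
    simp
  rw [← Finset.add_sum_erase _ _ hmem]
  have hrest : 3 ^ k ∣ ∑ p ∈ (Finset.HasAntidiagonal.antidiagonal (M + m0)).erase (M, m0),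
      N.choose p.1 * n0.choose p.2 := by
    apply Finset.dvd_sum
    intro p hp
    rw [Finset.mem_erase, Finset.HasAntidiagonal.mem_antidiagonal] at hp
    obtain ⟨hpne, hpsum⟩ := hp
    rcases Nat.lt_or_ge p.2 3 with h2 | h2
    · -- p.2 < 3, p.2 ≠ m0
      have hne2 : p.2 ≠ m0 := by
        intro h
        apply hpne
        have : p.1 = M := by omega
        exact Prod.ext this h
      have h3M : 3 ∣ M := dvd_trans (dvd_pow_self 3 (by omega)) hM
      have hnd : ¬ 3 ∣ p.1 := by
        obtain ⟨M', rfl⟩ := h3M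
        rintro ⟨t, ht⟩
        omega
      exact Dvd.dvd.mul_right (myDvdChoose k N p.1 hN hnd) _
    · rw [show n0.choose p.2 = 0 from Nat.choose_eq_zero_of_lt (by omega)]
      simp
  calc N.choose M * n0.choose m0 + ∑ p ∈ _, _
      ≡ N.choose M * n0.choose m0 + 0 [MOD 3 ^ k] :=
        Nat.ModEq.add_left _ ((Nat.modEq_zero_iff_dvd).mpr hrest)
    _ = N.choose M * n0.choose m0 := by ring

def Pfun (x : ℕ) : ℕ := ∏ j ∈ Finset.range x, (if 3 ∣ (j + 1) then 1 else j + 1)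

def Qfun (s x : ℕ) : ℕ := ∏ j ∈ Finset.range x, (if 3 ∣ (j + 1) then 1 else s + (j + 1))

lemma Pfun_pos (x : ℕ) : 0 < Pfun x := by
  apply Finset.prod_pos
  intro j _
  split <;> omega

lemma Pfun_coprime (x : ℕ) : Nat.Coprime (Pfun x) 3 := by
  apply Nat.Coprime.prod_left
  intro j _
  by_cases h : 3 ∣ (j + 1)
  · rw [if_pos h]; exact Nat.coprime_one_left 3
  · rw [if_neg h]; exact ((Nat.Prime.coprime_iff_not_dvd (by norm_num)).mpr h).symm

lemma fact_eq (a : ℕ) : (3 * a).factorial = 3 ^ a * a.factorial * Pfun (3 * a) := by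
  induction a with
  | zero => simp [Pfun]
  | succ a ih =>
    have h1 : 3 * (a + 1) = (3 * a) + 1 + 1 + 1 := by ring
    rw [h1]
    rw [Nat.factorial_succ, Nat.factorial_succ, Nat.factorial_succ, ih]
    have hP : Pfun (3 * a + 1 + 1 + 1) =
        Pfun (3 * a) * (3 * a + 1) * (3 * a + 2) := by
      unfold Pfun
      rw [Finset.prod_range_succ, Finset.prod_range_succ, Finset.prod_range_succ]
      rw [if_neg (by omega), if_neg (by omega), if_pos (by omega)]
      ring
    rw [hP, Nat.factorial_succ, pow_succ]
    ring

lemma Pfun_split (b c : ℕ) : Pfun (3 * b + 3 * c) = Pfun (3 * b) * Qfun (3 * b) (3 * c) := by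
  unfold Pfun Qfun
  rw [Finset.prod_range_add]
  congr 1
  apply Finset.prod_congr rfl
  intro j _
  have h : 3 ∣ (3 * b + j + 1) ↔ 3 ∣ (j + 1) := by omega
  by_cases hj : 3 ∣ (j + 1)
  · rw [if_pos (by omega), if_pos hj]
  · rw [if_neg (by omega), if_neg hj]
    ring

lemma choose_identity (b c : ℕ) :
    (3 * (b + c)).choose (3 * b) * Pfun (3 * c) = (b + c).choose b * Qfun (3 * b) (3 * c) := by
  have h1 := Nat.choose_mul_factorial_mul_factorial (show 3 * b ≤ 3 * (b + c) by omega)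
  have h2 := Nat.choose_mul_factorial_mul_factorial (show b ≤ b + c by omega)
  have hsub : 3 * (b + c) - 3 * b = 3 * c := by omega
  rw [hsub] at h1
  rw [show b + c - b = c by omega] at h2
  rw [fact_eq (b + c), fact_eq b, fact_eq c] at h1
  have hsplit : Pfun (3 * (b + c)) = Pfun (3 * b) * Qfun (3 * b) (3 * c) := by
    rw [show 3 * (b + c) = 3 * b + 3 * c by ring, Pfun_split]
  rw [hsplit] at h1
  -- h1 : C3 * (3^b * b! * P(3b)) * (3^c * c! * P(3c)) = 3^(b+c) * (b+c)! * (P(3b) * Q)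
  -- (b+c)! = C1 * b! * c!
  rw [← h2] at h1
  have hpos : 0 < 3 ^ (b + c) * (b.factorial * (c.factorial * Pfun (3 * b))) :=
    Nat.mul_pos (Nat.pow_pos (by norm_num))
      (Nat.mul_pos (Nat.factorial_pos _) (Nat.mul_pos (Nat.factorial_pos _) (Pfun_pos _)))
  apply Nat.eq_of_mul_eq_mul_left hpos
  calc 3 ^ (b + c) * (b.factorial * (c.factorial * Pfun (3 * b))) *
        ((3 * (b + c)).choose (3 * b) * Pfun (3 * c))
      = (3 * (b + c)).choose (3 * b) * (3 ^ b * b.factorial * Pfun (3 * b)) *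
        (3 ^ c * c.factorial * Pfun (3 * c)) := by rw [pow_add]; ring
    _ = 3 ^ (b + c) * ((b + c).choose b * b.factorial * c.factorial) *
        (Pfun (3 * b) * Qfun (3 * b) (3 * c)) := h1
    _ = 3 ^ (b + c) * (b.factorial * (c.factorial * Pfun (3 * b))) *
        ((b + c).choose b * Qfun (3 * b) (3 * c)) := by ring

lemma prod_one_add {R : Type*} [CommRing R] (ε : R) (hε : ε ^ 2 = 0) (s : Finset ℕ)
    (y : ℕ → R) : ∏ j ∈ s, (1 + ε * y j) = 1 + ε * ∑ j ∈ s, y j := by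
  classical
  induction s using Finset.induction_on with
  | empty => simp
  | insert a s ha ih =>
    rw [Finset.prod_insert ha, Finset.sum_insert ha, ih]
    linear_combination (y a * ∑ j ∈ s, y j) * hε

lemma inv_map_eq (N N' : ℕ) (h : N' ∣ N) (a : ℕ) (ha : Nat.Coprime a N) (ha' : Nat.Coprime a N') :
    (ZMod.castHom h (ZMod N')) ((a : ZMod N)⁻¹) = ((a : ZMod N'))⁻¹ := by
  have hu : IsUnit (a : ZMod N) := (ZMod.isUnit_iff_coprime a N).mpr ha
  have hu' : IsUnit (a : ZMod N') := (ZMod.isUnit_iff_coprime a N').mpr ha'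
  apply hu'.mul_left_cancel
  rw [ZMod.mul_inv_of_unit _ hu']
  have : (a : ZMod N') * (ZMod.castHom h (ZMod N')) ((a : ZMod N)⁻¹)
      = (ZMod.castHom h (ZMod N')) ((a : ZMod N) * (a : ZMod N)⁻¹) := by
    rw [map_mul, map_natCast]
  rw [this, ZMod.mul_inv_of_unit _ hu, map_one]

lemma invsum_eq_zero (i c : ℕ) (hc : 3 ^ i ∣ c) :
    ∑ j ∈ Finset.range c, (if 3 ∣ (j + 1) then 0 else ((j + 1 : ℕ) : ZMod (3 ^ i))⁻¹) = 0 := by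
  rcases Nat.eq_zero_or_pos i with rfl | hi
  · rw [pow_zero]
    exact Subsingleton.elim _ _
  have h3c : 3 ∣ c := dvd_trans (dvd_pow_self 3 (by omega)) hc
  have hczero : ((c : ℕ) : ZMod (3 ^ i)) = 0 := (ZMod.natCast_eq_zero_iff c (3 ^ i)).mpr hc
  have hflip : ∀ j ∈ Finset.range c, (if 3 ∣ (j + 1) then 0 else ((j + 1 : ℕ) : ZMod (3 ^ i))⁻¹)
      = (if ¬ 3 ∣ (j + 1) then ((j + 1 : ℕ) : ZMod (3 ^ i))⁻¹ else 0) := by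
    intro j _
    by_cases h : 3 ∣ (j + 1) <;> simp [h]
  rw [Finset.sum_congr rfl hflip, ← Finset.sum_filter]
  apply Finset.sum_involution (g := fun j _ => c - j - 2)
  · intro j hj
    rw [Finset.mem_filter, Finset.mem_range] at hj
    obtain ⟨hjc, h3⟩ := hj
    have hjc1 : j + 1 < c := by omega
    have hcast : ((c - j - 2 + 1 : ℕ) : ZMod (3 ^ i)) = -((j + 1 : ℕ) : ZMod (3 ^ i)) := by
      have : (c - j - 2 + 1 : ℕ) = c - (j + 1) := by omega
      rw [this, Nat.cast_sub (by omega), hczero]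
      ring
    rw [hcast]
    have hunit : IsUnit ((j + 1 : ℕ) : ZMod (3 ^ i)) := by
      rw [ZMod.isUnit_iff_coprime]
      exact Nat.Coprime.pow_right _ ((Nat.Prime.coprime_iff_not_dvd (by norm_num)).mpr h3).symm
    have hneg : (-((j + 1 : ℕ) : ZMod (3 ^ i)))⁻¹ = -(((j + 1 : ℕ) : ZMod (3 ^ i))⁻¹) := by
      apply ZMod.inv_eq_of_mul_eq_one
      rw [neg_mul_neg, ZMod.mul_inv_of_unit _ hunit]
    rw [hneg]; ring
  · intro j hj _
    rw [Finset.mem_filter, Finset.mem_range] at hj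
    obtain ⟨hjc, h3⟩ := hj
    have hjc1 : j + 1 < c := by omega
    omega
  · intro j hj
    rw [Finset.mem_filter, Finset.mem_range] at hj ⊢
    obtain ⟨hjc, h3⟩ := hj
    have hjc1 : j + 1 < c := by omega
    constructor
    · omega
    · omega
  · intro j hj
    rw [Finset.mem_filter, Finset.mem_range] at hj
    obtain ⟨hjc, h3⟩ := hj
    have hjc1 : j + 1 < c := by omega
    omega

lemma Qcong (i b c : ℕ) (hb : 3 ^ i ∣ b) (hc : 3 ^ i ∣ c) :
    Qfun b c ≡ Pfun c [MOD 3 ^ (2 * i)] := by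
  set M := 3 ^ (2 * i) with hM
  rw [← ZMod.natCast_eq_natCast_iff]
  obtain ⟨b₁, rfl⟩ := hb
  have hMdvd : (3 : ℕ) ^ i ∣ M := by rw [hM, two_mul, pow_add]; exact Dvd.intro _ rfl
  have hMM : ((3 : ZMod M)) ^ i * ((3 : ZMod M)) ^ i = 0 := by
    have : (((3 ^ i * 3 ^ i : ℕ)) : ZMod M) = 0 := by
      rw [ZMod.natCast_eq_zero_iff]
      rw [hM, two_mul, pow_add]
    push_cast at this
    exact this
  haveI : NeZero M := ⟨by positivity⟩
  have hε : (((3 : ZMod M)) ^ i) ^ 2 = 0 := by rw [sq]; exact hMM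
  -- coprimality of the unit factors
  have hcop : ∀ j : ℕ, ¬ 3 ∣ (j + 1) → Nat.Coprime (j + 1) M := fun j h3 =>
    Nat.Coprime.pow_right _ ((Nat.Prime.coprime_iff_not_dvd (by norm_num)).mpr h3).symm
  have hcop' : ∀ j : ℕ, ¬ 3 ∣ (j + 1) → Nat.Coprime (j + 1) (3 ^ i) := fun j h3 =>
    Nat.Coprime.pow_right _ ((Nat.Prime.coprime_iff_not_dvd (by norm_num)).mpr h3).symm
  -- cast the products
  have hQ : ((Qfun (3 ^ i * b₁) c : ℕ) : ZMod M)
      = ∏ j ∈ Finset.range c,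
          (if 3 ∣ (j + 1) then (1 : ZMod M) else (3 : ZMod M) ^ i * (b₁ : ZMod M) + ((j + 1 : ℕ) : ZMod M)) := by
    rw [Qfun, Nat.cast_prod]
    apply Finset.prod_congr rfl
    intro j _
    by_cases h3 : 3 ∣ (j + 1) <;> simp [h3] <;> push_cast <;> ring
  have hP : ((Pfun c : ℕ) : ZMod M)
      = ∏ j ∈ Finset.range c, (if 3 ∣ (j + 1) then (1 : ZMod M) else ((j + 1 : ℕ) : ZMod M)) := by
    rw [Pfun, Nat.cast_prod]
    apply Finset.prod_congr rfl
    intro j _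
    by_cases h3 : 3 ∣ (j + 1) <;> simp [h3]
  rw [hQ, hP]
  -- factor each term: (if .. then 1 else u + εb₁) = (if .. then 1 else u) * (1 + ε * y j)
  set ε : ZMod M := (3 : ZMod M) ^ i with hεdef
  set y : ℕ → ZMod M := fun j => if 3 ∣ (j + 1) then 0 else (b₁ : ZMod M) * ((j + 1 : ℕ) : ZMod M)⁻¹ with hy
  have hfac : ∀ j ∈ Finset.range c,
      (if 3 ∣ (j + 1) then (1 : ZMod M) else ε * (b₁ : ZMod M) + ((j + 1 : ℕ) : ZMod M))
      = (if 3 ∣ (j + 1) then (1 : ZMod M) else ((j + 1 : ℕ) : ZMod M)) * (1 + ε * y j) := by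
    intro j _
    by_cases h3 : 3 ∣ (j + 1)
    · simp [hy, h3]
    · have hu : IsUnit ((j + 1 : ℕ) : ZMod M) := (ZMod.isUnit_iff_coprime _ _).mpr (hcop j h3)
      simp only [hy, if_neg h3]
      rw [mul_add, mul_one, mul_comm ε _, ← mul_assoc]
      rw [mul_comm (((j + 1 : ℕ) : ZMod M)) ε, mul_assoc ε, mul_comm (((j + 1 : ℕ) : ZMod M)) ((b₁ : ZMod M) * _), mul_assoc]
      rw [ZMod.inv_mul_of_unit _ hu]
      ring
  rw [Finset.prod_congr rfl hfac, Finset.prod_mul_distrib, prod_one_add ε hε]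
  -- now show ε * ∑ y = 0
  have hsum : ε * ∑ j ∈ Finset.range c, y j = 0 := by
    -- map to ZMod 3^i
    set φ := ZMod.castHom hMdvd (ZMod (3 ^ i)) with hφ
    have hφsum : φ (∑ j ∈ Finset.range c, y j) = 0 := by
      rw [map_sum]
      have : ∀ j ∈ Finset.range c, φ (y j)
          = (b₁ : ZMod (3 ^ i)) * (if 3 ∣ (j + 1) then 0 else ((j + 1 : ℕ) : ZMod (3 ^ i))⁻¹) := by
        intro j _
        by_cases h3 : 3 ∣ (j + 1)
        · simp [hy, h3]
        · simp only [hy, if_neg h3]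
          rw [map_mul, map_natCast, inv_map_eq _ _ hMdvd _ (hcop j h3) (hcop' j h3)]
      rw [Finset.sum_congr rfl this, ← Finset.mul_sum, invsum_eq_zero i c hc, mul_zero]
    -- kernel: ∃ z, ∑ y = 3^i * z
    obtain ⟨w, hw⟩ : (3:ℕ) ^ i ∣ (∑ j ∈ Finset.range c, y j).val := by
      have := hφsum
      rw [hφ] at this
      have hval : ((∑ j ∈ Finset.range c, y j).val : ZMod (3 ^ i)) = 0 := by
        have hxx : (((∑ j ∈ Finset.range c, y j).val : ℕ) : ZMod M) = ∑ j ∈ Finset.range c, y j :=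
          ZMod.natCast_zmod_val _
        calc ((∑ j ∈ Finset.range c, y j).val : ZMod (3 ^ i))
            = φ (((∑ j ∈ Finset.range c, y j).val : ℕ) : ZMod M) := (map_natCast φ _).symm
          _ = φ (∑ j ∈ Finset.range c, y j) := by rw [hxx]
          _ = 0 := this
      exact (ZMod.natCast_eq_zero_iff _ _).mp hval
    have hx : (∑ j ∈ Finset.range c, y j) = ((3 ^ i * w : ℕ) : ZMod M) := by
      rw [← hw, ZMod.natCast_zmod_val]
    rw [hx]
    push_cast
    rw [← mul_assoc, hεdef, hMM]
    ring
  rw [hsum, add_zero, mul_one]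

lemma step (i n m : ℕ) :
    (n * 3 ^ (i + 1)).choose (m * 3 ^ (i + 1)) ≡
      (n * 3 ^ i).choose (m * 3 ^ i) [MOD 3 ^ (2 * (i + 1))] := by
  rcases Nat.lt_or_ge n m with h | h
  · have p1 : (0:ℕ) < 3 ^ (i+1) := Nat.pow_pos (by norm_num)
    have p2 : (0:ℕ) < 3 ^ i := Nat.pow_pos (by norm_num)
    rw [Nat.choose_eq_zero_of_lt (by exact Nat.mul_lt_mul_of_lt_of_le h (le_refl _) p1),
      Nat.choose_eq_zero_of_lt (by exact Nat.mul_lt_mul_of_lt_of_le h (le_refl _) p2)]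
  · set b := m * 3 ^ i with hb
    set c := (n - m) * 3 ^ i with hc
    have hbc : b + c = n * 3 ^ i := by rw [hb, hc, ← Nat.add_mul]; congr 1; omega
    have h1 : n * 3 ^ (i + 1) = 3 * (b + c) := by rw [hbc, pow_succ]; ring
    have h2 : m * 3 ^ (i + 1) = 3 * b := by rw [hb, pow_succ]; ring
    rw [h1, h2, hbc.symm]
    have hid := choose_identity b c
    have hdvd3b : 3 ^ (i + 1) ∣ 3 * b := ⟨m, by rw [hb, pow_succ]; ring⟩
    have hdvd3c : 3 ^ (i + 1) ∣ 3 * c := ⟨n - m, by rw [hc, pow_succ]; ring⟩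
    have hq : Qfun (3 * b) (3 * c) ≡ Pfun (3 * c) [MOD 3 ^ (2 * (i + 1))] :=
      Qcong (i + 1) _ _ hdvd3b hdvd3c
    have hcong : (3 * (b + c)).choose (3 * b) * Pfun (3 * c) ≡
        (b + c).choose b * Pfun (3 * c) [MOD 3 ^ (2 * (i + 1))] := by
      calc (3 * (b + c)).choose (3 * b) * Pfun (3 * c)
          = (b + c).choose b * Qfun (3 * b) (3 * c) := hid
        _ ≡ (b + c).choose b * Pfun (3 * c) [MOD 3 ^ (2 * (i + 1))] := hq.mul_left _
    apply Nat.ModEq.cancel_right_of_coprime _ hcong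
    exact Nat.Coprime.pow_left (2 * (i + 1)) (Pfun_coprime (3 * c)).symm

lemma chain (n m : ℕ) : ∀ d q : ℕ, (∀ j, q ≤ j → j < q + d → q + d ≤ 2 * (j + 1)) →
    (n * 3 ^ (q + d)).choose (m * 3 ^ (q + d)) ≡
      (n * 3 ^ q).choose (m * 3 ^ q) [MOD 3 ^ (q + d)] := by
  intro d
  induction d with
  | zero => intro q _; rfl
  | succ d ih =>
    intro q hq
    have h1 : q + (d + 1) = (q + 1) + d := by omega
    rw [h1]
    have ihq := ih (q + 1) (fun j hj hj2 => by have := hq j (by omega) (by omega); omega)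
    refine ihq.trans ?_
    have hstep := step q n m
    have hdvd : 3 ^ ((q + 1) + d) ∣ 3 ^ (2 * (q + 1)) :=
      pow_dvd_pow 3 (by have := hq q (le_refl q) (by omega); omega)
    exact (hstep.of_dvd hdvd)

theorem stmt10 (k n m n0 m0 : ℕ) (hk : 1 ≤ k) (hn0 : n0 < 3) (hm0 : m0 < 3) :
    (n * 3 ^ k + n0).choose (m * 3 ^ k + m0) ≡
      (n * 3 ^ ((k - 1) / 2)).choose (m * 3 ^ ((k - 1) / 2)) * n0.choose m0 [MOD 3 ^ k] := by
  set q := (k - 1) / 2 with hq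
  have hqk : q ≤ k := by omega
  obtain ⟨d, hd⟩ : ∃ d, k = q + d := ⟨k - q, by omega⟩
  have h1 : (n * 3 ^ k + n0).choose (m * 3 ^ k + m0) ≡
      (n * 3 ^ k).choose (m * 3 ^ k) * n0.choose m0 [MOD 3 ^ k] :=
    lucasStep k (n * 3 ^ k) (m * 3 ^ k) n0 m0 hk ⟨n, mul_comm _ _⟩ ⟨m, mul_comm _ _⟩ hn0 hm0
  have h2 : (n * 3 ^ k).choose (m * 3 ^ k) ≡
      (n * 3 ^ q).choose (m * 3 ^ q) [MOD 3 ^ k] := by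
    rw [hd]
    exact chain n m d q (fun j hj hj2 => by omega)
  exact h1.trans (h2.mul_right _)
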